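/- Let δ > 0, let G₁ = (V,E₁) and G₂ = (V,E₂) be graphs on a common finite vertex set with maximum degree at most Δ, and let k > (6+δ)Δ. For every pair of colorings X, Y ∈ {1,…,k}^{V̂} that differ at exactly one vertex, there exists a coupling of the one-step transition distributions of the Glauber dynamics started from X and from Y under which E[Ĥ(X′,Y′)] ≤ (1 − δ/((6+δ)·m)) · Ĥ(X,Y). -/

import Mathlib

open Classical

noncomputable section

/-- The vertex set of the graph `Ĝ`: the edges of `G₁ ∪ G₂`. -/
abbrev HatVertex {V : Type} (G₁ G₂ : SimpleGraph V) : Type :=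
  {e : Sym2 V // e ∈ G₁.edgeSet ∪ G₂.edgeSet}

/-- The graph `Ĝ`: the union of the line graphs of `G₁` and `G₂`, identifying vertices
corresponding to edges appearing in both graphs.  Two distinct edges are adjacent iff they
share an endpoint and both lie in `E₁` or both lie in `E₂`. -/
def hatG {V : Type} (G₁ G₂ : SimpleGraph V) : SimpleGraph (HatVertex G₁ G₂) where
  Adj e f := e ≠ f ∧ (∃ x : V, x ∈ e.1 ∧ x ∈ f.1) ∧
    ((e.1 ∈ G₁.edgeSet ∧ f.1 ∈ G₁.edgeSet) ∨ (e.1 ∈ G₂.edgeSet ∧ f.1 ∈ G₂.edgeSet))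
  symm := by
    constructor
    rintro e f ⟨h1, ⟨x, hx1, hx2⟩, h3⟩
    exact ⟨h1.symm, ⟨x, hx2, hx1⟩, by tauto⟩
  loopless := by
    constructor
    rintro e ⟨h1, -, -⟩
    exact h1 rfl

instance {V : Type} [Fintype V] (G₁ G₂ : SimpleGraph V) : Fintype (HatVertex G₁ G₂) :=
  Fintype.ofFinite _

/-- The weight of a vertex of `Ĝ`: `2` if the corresponding edge lies in both graphs,
`1` otherwise. -/
def hatWeight {V : Type} (G₁ G₂ : SimpleGraph V) (e : HatVertex G₁ G₂) : ℕ :=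
  if e.1 ∈ G₁.edgeSet ∧ e.1 ∈ G₂.edgeSet then 2 else 1

/-- A proper vertex coloring of a graph. -/
def IsProperVertexColoring {α β : Type} (H : SimpleGraph α) (σ : α → β) : Prop :=
  ∀ u w, H.Adj u w → σ u ≠ σ w

/-- A simultaneous edge `k`-coloring of the pair `(G₁, G₂)`. -/
def IsSimultaneousEdgeColoring {V : Type} (G₁ G₂ : SimpleGraph V) {k : ℕ}
    (φ : HatVertex G₁ G₂ → Fin k) : Prop :=
  (∀ e f : HatVertex G₁ G₂, e.1 ∈ G₁.edgeSet → f.1 ∈ G₁.edgeSet → e ≠ f →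
      (∃ x : V, x ∈ e.1 ∧ x ∈ f.1) → φ e ≠ φ f) ∧
  (∀ e f : HatVertex G₁ G₂, e.1 ∈ G₂.edgeSet → f.1 ∈ G₂.edgeSet → e ≠ f →
      (∃ x : V, x ∈ e.1 ∧ x ∈ f.1) → φ e ≠ φ f)

/-- The weighted Hamming distance `Ĥ`. -/
def hatH {V : Type} [Fintype V] (G₁ G₂ : SimpleGraph V) {k : ℕ}
    (σ τ : HatVertex G₁ G₂ → Fin k) : ℝ :=
  ∑ v : HatVertex G₁ G₂, if σ v ≠ τ v then (hatWeight G₁ G₂ v : ℝ) else 0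

/-- One step of a Markov chain applied to a distribution. -/
def stepDist {Ω : Type} [Fintype Ω] (P : Ω → Ω → ℝ) (μ : Ω → ℝ) : Ω → ℝ :=
  fun τ => ∑ σ, μ σ * P σ τ

/-- Total variation distance between two distributions on a finite state space. -/
def tvDist {Ω : Type} [Fintype Ω] (μ ν : Ω → ℝ) : ℝ :=
  (∑ x, |μ x - ν x|) / 2

/-- The point mass at a state. -/
def deltaDist {Ω : Type} (x : Ω) : Ω → ℝ :=
  fun y => if y = x then 1 else 0

/-- A coupling of two distributions on a finite set. -/
def IsCoupling {Ω : Type} [Fintype Ω] (γ : Ω × Ω → ℝ) (μ ν : Ω → ℝ) : Prop :=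
  (∀ q, 0 ≤ γ q) ∧ (∀ a, ∑ b, γ (a, b) = μ a) ∧ (∀ b, ∑ a, γ (a, b) = ν b)

/-- The result of a Glauber update at `(v, c)`: recolor `v` with `c` provided no
`Ĝ`-neighbor of `v` has color `c`. -/
def glauberStep {V : Type} (G₁ G₂ : SimpleGraph V) {k : ℕ}
    (σ : HatVertex G₁ G₂ → Fin k) (v : HatVertex G₁ G₂) (c : Fin k) :
    HatVertex G₁ G₂ → Fin k :=
  if ∀ w, (hatG G₁ G₂).Adj v w → σ w ≠ c then Function.update σ v c else σ

/-- The transition matrix of the Glauber dynamics on `{1,…,k}^{V̂}`. -/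
def glauberP {V : Type} [Fintype V] (G₁ G₂ : SimpleGraph V) (k : ℕ)
    (σ τ : HatVertex G₁ G₂ → Fin k) : ℝ :=
  (∑ v : HatVertex G₁ G₂, ∑ c : Fin k,
      if glauberStep G₁ G₂ σ v c = τ then (1 : ℝ) else 0) /
    ((Fintype.card (HatVertex G₁ G₂) : ℝ) * (k : ℝ))

/-- The uniform distribution over the proper vertex `k`-colorings of `Ĝ`,
viewed as a distribution on all of `{1,…,k}^{V̂}`. -/
def uniformProper {V : Type} [Fintype V] (G₁ G₂ : SimpleGraph V) (k : ℕ) :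
    (HatVertex G₁ G₂ → Fin k) → ℝ :=
  fun σ => if IsProperVertexColoring (hatG G₁ G₂) σ then
      (1 : ℝ) / (Nat.card {τ : HatVertex G₁ G₂ → Fin k //
        IsProperVertexColoring (hatG G₁ G₂) τ} : ℝ)
    else 0

/-- The graph of `(σ(v), c)`-alternating steps. -/
def clusterGraph {α β : Type} (H : SimpleGraph α) (σ : α → β) (v : α) (c : β) :
    SimpleGraph α where
  Adj w w' := H.Adj w w' ∧ ((σ w = σ v ∧ σ w' = c) ∨ (σ w = c ∧ σ w' = σ v))
  symm := by
    constructor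
    rintro w w' ⟨h1, h2⟩
    exact ⟨h1.symm, by tauto⟩
  loopless := by
    constructor
    rintro w ⟨h1, -⟩
    exact H.irrefl h1

/-- The cluster `S_σ(v,c)`: the set of vertices reachable from `v` by a
`(σ(v), c)`-alternating path, with `S_σ(v, σ(v)) = {v}`. -/
def cluster {α β : Type} (H : SimpleGraph α) (σ : α → β) (v : α) (c : β) : Set α :=
  if c = σ v then {v} else {w | (clusterGraph H σ v c).Reachable v w}

/-- The coloring obtained by interchanging the colors `σ(v)` and `c` on the cluster
`S_σ(v,c)`. -/
def flipColoring {α β : Type} (H : SimpleGraph α) (σ : α → β) (v : α) (c : β) : α → β :=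
  fun w => if w ∈ cluster H σ v c then
      if σ w = σ v then c else if σ w = c then σ v else σ w
    else σ w

/-- The transition matrix of the flip dynamics with flip parameters `p`. -/
def flipP {α : Type} [Fintype α] (H : SimpleGraph α) (k : ℕ) (p : ℕ → ℝ)
    (σ τ : α → Fin k) : ℝ :=
  (∑ v : α, ∑ c : Fin k,
      ((p (Nat.card (cluster H σ v c)) / (Nat.card (cluster H σ v c) : ℝ)) *
          (if flipColoring H σ v c = τ then (1 : ℝ) else 0) +
        (1 - p (Nat.card (cluster H σ v c)) / (Nat.card (cluster H σ v c) : ℝ)) *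
          (if σ = τ then (1 : ℝ) else 0))) /
    ((Fintype.card α : ℝ) * (k : ℝ))

/-- The explicit flip parameters `P₁ = 1, P₂ = 137/650, P₃ = 77/650, P₄ = 47/650,
P₅ = 27/650, P₆ = 12/650`, and `P_i = 0` for `i ≥ 7`. -/
def flipParams : ℕ → ℝ := fun i =>
  if i = 1 then 1
  else if i = 2 then 137 / 650
  else if i = 3 then 77 / 650
  else if i = 4 then 47 / 650
  else if i = 5 then 27 / 650
  else if i = 6 then 12 / 650
  else 0

/-- The set of (not necessarily proper) `L`-colorings. -/
def ListColorings {α : Type} (L : α → Finset ℕ) : Type :=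
  {f : α → ℕ // ∀ v, f v ∈ L v}

instance {α : Type} [Finite α] (L : α → Finset ℕ) : Finite (ListColorings L) :=
  Finite.of_injective
    (fun f => (fun v => (⟨f.1 v, f.2 v⟩ : {c : ℕ // c ∈ L v})))
    (by
      intro f g h
      apply Subtype.ext
      funext v
      exact congrArg Subtype.val (congrFun h v))

instance {α : Type} [Fintype α] (L : α → Finset ℕ) : Fintype (ListColorings L) :=
  Fintype.ofFinite _

/-- The `i`-th smallest element of a finite set of natural numbers (0-indexed). -/
def nthColor (L : Finset ℕ) (i : ℕ) : ℕ :=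
  (L.sort (· ≤ ·)).getD i 0

/-- A cluster is flippable if both of its colors belong to the list of every vertex in it. -/
def ListFlippable {α : Type} (H : SimpleGraph α) (L : α → Finset ℕ) (σ : α → ℕ)
    (v : α) (c : ℕ) : Prop :=
  ∀ w ∈ cluster H σ v c, σ v ∈ L w ∧ c ∈ L w

/-- The transition matrix of the flip dynamics for `L`-list colorings. -/
def listFlipP {α : Type} [Fintype α] (H : SimpleGraph α) (L : α → Finset ℕ) (k : ℕ)
    (p : ℕ → ℝ) (σ τ : ListColorings L) : ℝ :=
  (∑ v : α, ∑ i : Fin k,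
      ((if ListFlippable H L σ.1 v (nthColor (L v) i) then
          p (Nat.card (cluster H σ.1 v (nthColor (L v) i))) /
            (Nat.card (cluster H σ.1 v (nthColor (L v) i)) : ℝ)
        else 0) *
          (if flipColoring H σ.1 v (nthColor (L v) i) = τ.1 then (1 : ℝ) else 0) +
        (1 - (if ListFlippable H L σ.1 v (nthColor (L v) i) then
          p (Nat.card (cluster H σ.1 v (nthColor (L v) i))) /
            (Nat.card (cluster H σ.1 v (nthColor (L v) i)) : ℝ)
        else 0)) *
          (if σ = τ then (1 : ℝ) else 0))) /
    ((Fintype.card α : ℝ) * (k : ℝ))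

/-- The uniform distribution over the proper `L`-colorings. -/
def uniformProperList {α : Type} [Fintype α] (H : SimpleGraph α) (L : α → Finset ℕ) :
    ListColorings L → ℝ :=
  fun σ => if IsProperVertexColoring H σ.1 then
      (1 : ℝ) / (Nat.card {τ : ListColorings L // IsProperVertexColoring H τ.1} : ℝ)
    else 0

/-- Two states differ in exactly one coordinate. -/
def AdjOne {N S : Type} (σ ξ : N → S) : Prop :=
  ∃ i, σ i ≠ ξ i ∧ ∀ j, j ≠ i → σ j = ξ j

/-- The set of total `Φ`-lengths of simple paths from `σ` to `ξ` inside `Ω` whose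
consecutive states differ in exactly one coordinate. -/
def PathSums {N S : Type} (Ω : Finset (N → S)) (Φ : (N → S) → (N → S) → ℕ)
    (σ ξ : N → S) : Set ℕ :=
  {s | ∃ (ℓ : ℕ) (η : Fin (ℓ + 1) → (N → S)),
    (∀ i, η i ∈ Ω) ∧ Function.Injective η ∧
    η 0 = σ ∧ η (Fin.last ℓ) = ξ ∧
    (∀ i : Fin ℓ, AdjOne (η i.castSucc) (η i.succ)) ∧
    s = ∑ i : Fin ℓ, Φ (η i.castSucc) (η i.succ)}

/-- A single move of the Glauber dynamics: recolor one vertex with a color not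
appearing in its `Ĝ`-neighborhood. -/
def GlauberMove {V : Type} (G₁ G₂ : SimpleGraph V) {k : ℕ}
    (σ τ : HatVertex G₁ G₂ → Fin k) : Prop :=
  ∃ (v : HatVertex G₁ G₂) (c : Fin k),
    (∀ w, (hatG G₁ G₂).Adj v w → σ w ≠ c) ∧ τ = Function.update σ v c

end


noncomputable section

/-- counting: edges of G sharing an endpoint with a fixed edge s(a,b), other than it -/
lemma count_edges {V : Type} [Fintype V] [DecidableEq V] (G : SimpleGraph V) (Δ : ℕ)
    (hG : ∀ x : V, (G.neighborSet x).ncard ≤ Δ) (a b : V) (hab : G.Adj a b)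
    (s : Finset (Sym2 V))
    (hs : ∀ f ∈ s, f ∈ G.edgeSet ∧ f ≠ s(a, b) ∧ ∃ x, x ∈ (s(a, b) : Sym2 V) ∧ x ∈ f) :
    s.card + 2 ≤ 2 * Δ := by
  classical
  have hdeg : ∀ x : V,
      (Finset.univ.filter (fun f : Sym2 V => f ∈ G.edgeSet ∧ x ∈ f)).card ≤ Δ := by
    intro x
    have hn : (Finset.univ.filter (fun y => G.Adj x y)).card ≤ Δ := by
      have : G.neighborSet x = ↑(Finset.univ.filter (fun y => G.Adj x y)) := by
        ext y; simp [SimpleGraph.neighborSet]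
      have h := hG x
      rwa [this, Set.ncard_coe_finset] at h
    refine le_trans (le_trans (Finset.card_le_card ?_)
      (Finset.card_image_le (f := fun y => s(x, y)))) hn
    intro f hf
    simp only [Finset.mem_filter, Finset.mem_univ, true_and] at hf
    induction f using Sym2.ind with
    | _ u w =>
      obtain ⟨hadj, hmem⟩ := hf
      rw [SimpleGraph.mem_edgeSet] at hadj
      rw [Sym2.mem_iff] at hmem
      rcases hmem with rfl | rfl
      · exact Finset.mem_image.2 ⟨w, by simp [hadj], rfl⟩
      · exact Finset.mem_image.2 ⟨u, by simp [hadj.symm], Sym2.eq_swap⟩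
  set Ia := Finset.univ.filter (fun f : Sym2 V => f ∈ G.edgeSet ∧ a ∈ f) with hIa
  set Ib := Finset.univ.filter (fun f : Sym2 V => f ∈ G.edgeSet ∧ b ∈ f) with hIb
  have heA : s(a, b) ∈ Ia := by simp [hIa, hab]
  have heB : s(a, b) ∈ Ib := by simp [hIb, hab]
  have hsub : s ⊆ (Ia.erase s(a, b)) ∪ (Ib.erase s(a, b)) := by
    intro f hf
    obtain ⟨hfE, hfne, x, hxe, hxf⟩ := hs f hf
    rw [Sym2.mem_iff] at hxe
    rcases hxe with rfl | rfl
    · exact Finset.mem_union_left _ (Finset.mem_erase.2 ⟨hfne, by simp [hIa, hfE, hxf]⟩)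
    · exact Finset.mem_union_right _ (Finset.mem_erase.2 ⟨hfne, by simp [hIb, hfE, hxf]⟩)
  have h1 := Finset.card_le_card hsub
  have h2 := Finset.card_union_le (Ia.erase s(a, b)) (Ib.erase s(a, b))
  rw [Finset.card_erase_of_mem heA, Finset.card_erase_of_mem heB] at h2
  have ha' : Ia.card ≤ Δ := by rw [hIa]; exact hdeg a
  have hb' : Ib.card ≤ Δ := by rw [hIb]; exact hdeg b
  have hA1 : 1 ≤ Ia.card := Finset.card_pos.2 ⟨_, heA⟩
  have hB1 : 1 ≤ Ib.card := Finset.card_pos.2 ⟨_, heB⟩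
  omega

lemma hatWeight_eq {V : Type} (G₁ G₂ : SimpleGraph V) (w : HatVertex G₁ G₂) :
    hatWeight G₁ G₂ w =
      (if w.1 ∈ G₁.edgeSet then 1 else 0) + (if w.1 ∈ G₂.edgeSet then 1 else 0) := by
  have h : w.1 ∈ G₁.edgeSet ∨ w.1 ∈ G₂.edgeSet := w.2
  unfold hatWeight
  by_cases h1 : w.1 ∈ G₁.edgeSet <;> by_cases h2 : w.1 ∈ G₂.edgeSet
  · rw [if_pos ⟨h1, h2⟩, if_pos h1, if_pos h2]
  · rw [if_neg (fun hc => h2 hc.2), if_pos h1, if_neg h2]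
  · rw [if_neg (fun hc => h1 hc.1), if_neg h1, if_pos h2]
  · exact absurd h (by tauto)

lemma one_le_hatWeight {V : Type} (G₁ G₂ : SimpleGraph V) (w : HatVertex G₁ G₂) :
    1 ≤ hatWeight G₁ G₂ w := by
  unfold hatWeight; split_ifs <;> norm_num

/-- the combinatorial degree bound -/
lemma nbhd_bound {V : Type} [Fintype V] [DecidableEq V] (G₁ G₂ : SimpleGraph V) (Δ : ℕ)
    (h₁ : ∀ x : V, (G₁.neighborSet x).ncard ≤ Δ)
    (h₂ : ∀ x : V, (G₂.neighborSet x).ncard ≤ Δ) (v : HatVertex G₁ G₂) :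
    (Finset.univ.filter (fun w => (hatG G₁ G₂).Adj v w)).card * hatWeight G₁ G₂ v
      + ∑ w ∈ Finset.univ.filter (fun w => (hatG G₁ G₂).Adj v w), hatWeight G₁ G₂ w
      ≤ 6 * Δ * hatWeight G₁ G₂ v := by
  classical
  set Nb := Finset.univ.filter (fun w => (hatG G₁ G₂).Adj v w) with hNb
  set S₁ : Finset (HatVertex G₁ G₂) :=
    Finset.univ.filter (fun w => w.1 ≠ v.1 ∧ w.1 ∈ G₁.edgeSet ∧ ∃ x, x ∈ v.1 ∧ x ∈ w.1) with hS₁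
  set S₂ : Finset (HatVertex G₁ G₂) :=
    Finset.univ.filter (fun w => w.1 ≠ v.1 ∧ w.1 ∈ G₂.edgeSet ∧ ∃ x, x ∈ v.1 ∧ x ∈ w.1) with hS₂
  -- card bounds for S₁ S₂
  have hcard : ∀ (G : SimpleGraph V), (∀ x : V, (G.neighborSet x).ncard ≤ Δ) →
      v.1 ∈ G.edgeSet →
      ∀ (S : Finset (HatVertex G₁ G₂)),
      (∀ w ∈ S, w.1 ≠ v.1 ∧ w.1 ∈ G.edgeSet ∧ ∃ x, x ∈ v.1 ∧ x ∈ w.1) →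
      S.card + 2 ≤ 2 * Δ := by
    intro G hG hv S hS
    obtain ⟨a, b, hab, hvab⟩ : ∃ a b, G.Adj a b ∧ v.1 = s(a, b) := by
      have hv' := hv
      revert hv'
      induction v.1 using Sym2.ind with
      | _ a b => intro hv'; exact ⟨a, b, hv', rfl⟩
    have := count_edges G Δ hG a b hab (S.image Subtype.val) ?_
    · rwa [Finset.card_image_of_injective _ Subtype.val_injective] at this
    · intro f hf
      obtain ⟨w, hw, rfl⟩ := Finset.mem_image.1 hf
      obtain ⟨hne, hE, hsh⟩ := hS w hw
      exact ⟨hE, by rw [← hvab]; exact hne, by rw [← hvab]; exact hsh⟩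
  -- membership helpers
  have hmem : ∀ w ∈ Nb, w ≠ v ∧ (∃ x, x ∈ v.1 ∧ x ∈ w.1) ∧
      ((v.1 ∈ G₁.edgeSet ∧ w.1 ∈ G₁.edgeSet) ∨ (v.1 ∈ G₂.edgeSet ∧ w.1 ∈ G₂.edgeSet)) := by
    intro w hw
    have : (hatG G₁ G₂).Adj v w := (Finset.mem_filter.1 hw).2
    obtain ⟨hne, hsh, hcase⟩ := this
    exact ⟨Ne.symm hne, hsh, hcase⟩
  have hval : ∀ w : HatVertex G₁ G₂, w ≠ v → w.1 ≠ v.1 := by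
    intro w h hh; exact h (Subtype.ext hh)
  have hsub1 : ∀ w ∈ Nb, w.1 ∈ G₁.edgeSet → w ∈ S₁ := by
    intro w hw hE
    obtain ⟨hne, hsh, _⟩ := hmem w hw
    simp only [hS₁, Finset.mem_filter, Finset.mem_univ, true_and]
    exact ⟨hval w hne, hE, by
      obtain ⟨x, hx1, hx2⟩ := hsh; exact ⟨x, hx1, hx2⟩⟩
  have hsub2 : ∀ w ∈ Nb, w.1 ∈ G₂.edgeSet → w ∈ S₂ := by
    intro w hw hE
    obtain ⟨hne, hsh, _⟩ := hmem w hw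
    simp only [hS₂, Finset.mem_filter, Finset.mem_univ, true_and]
    exact ⟨hval w hne, hE, by
      obtain ⟨x, hx1, hx2⟩ := hsh; exact ⟨x, hx1, hx2⟩⟩
  -- split the weight sum
  have hsum : ∑ w ∈ Nb, hatWeight G₁ G₂ w =
      (Nb.filter (fun w => w.1 ∈ G₁.edgeSet)).card +
      (Nb.filter (fun w => w.1 ∈ G₂.edgeSet)).card := by
    rw [Finset.card_filter, Finset.card_filter, ← Finset.sum_add_distrib]
    exact Finset.sum_congr rfl fun w _ => hatWeight_eq G₁ G₂ w
  have hf1 : (Nb.filter (fun w => w.1 ∈ G₁.edgeSet)).card ≤ S₁.card :=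
    Finset.card_le_card (fun w hw => by
      obtain ⟨hw1, hw2⟩ := Finset.mem_filter.1 hw
      exact hsub1 w hw1 hw2)
  have hf2 : (Nb.filter (fun w => w.1 ∈ G₂.edgeSet)).card ≤ S₂.card :=
    Finset.card_le_card (fun w hw => by
      obtain ⟨hw1, hw2⟩ := Finset.mem_filter.1 hw
      exact hsub2 w hw1 hw2)
  have hv12 := v.2
  rw [Set.mem_union] at hv12
  by_cases hv1 : v.1 ∈ G₁.edgeSet <;> by_cases hv2 : v.1 ∈ G₂.edgeSet
  · -- weight 2
    have hW : hatWeight G₁ G₂ v = 2 := by unfold hatWeight; rw [if_pos ⟨hv1, hv2⟩]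
    have hc1 : S₁.card + 2 ≤ 2 * Δ := hcard G₁ h₁ hv1 S₁ (fun w hw => by
      simpa [hS₁] using (Finset.mem_filter.1 hw).2)
    have hc2 : S₂.card + 2 ≤ 2 * Δ := hcard G₂ h₂ hv2 S₂ (fun w hw => by
      simpa [hS₂] using (Finset.mem_filter.1 hw).2)
    have hd : Nb.card ≤ S₁.card + S₂.card := by
      refine le_trans (Finset.card_le_card (t := S₁ ∪ S₂) ?_) (Finset.card_union_le _ _)
      intro w hw
      obtain ⟨_, _, hcase⟩ := hmem w hw
      rcases hcase with ⟨_, hE⟩ | ⟨_, hE⟩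
      · exact Finset.mem_union_left _ (hsub1 w hw hE)
      · exact Finset.mem_union_right _ (hsub2 w hw hE)
    rw [hsum, hW]
    omega
  · -- only in G₁
    have hW : hatWeight G₁ G₂ v = 1 := by
      unfold hatWeight; rw [if_neg (by tauto)]
    have hc1 : S₁.card + 2 ≤ 2 * Δ := hcard G₁ h₁ hv1 S₁ (fun w hw => by
      simpa [hS₁] using (Finset.mem_filter.1 hw).2)
    have hNbS : Nb ⊆ S₁ := by
      intro w hw
      obtain ⟨_, _, hcase⟩ := hmem w hw
      rcases hcase with ⟨_, hE⟩ | ⟨hve, _⟩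
      · exact hsub1 w hw hE
      · exact absurd hve hv2
    have hd : Nb.card ≤ S₁.card := Finset.card_le_card hNbS
    have hf2' : (Nb.filter (fun w => w.1 ∈ G₂.edgeSet)).card ≤ S₁.card :=
      Finset.card_le_card (fun w hw => hNbS (Finset.mem_filter.1 hw).1)
    have hf1' : (Nb.filter (fun w => w.1 ∈ G₁.edgeSet)).card ≤ S₁.card :=
      Finset.card_le_card (fun w hw => hNbS (Finset.mem_filter.1 hw).1)
    rw [hsum, hW]
    omega
  · -- only in G₂
    have hW : hatWeight G₁ G₂ v = 1 := by
      unfold hatWeight; rw [if_neg (by tauto)]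
    have hc2 : S₂.card + 2 ≤ 2 * Δ := hcard G₂ h₂ hv2 S₂ (fun w hw => by
      simpa [hS₂] using (Finset.mem_filter.1 hw).2)
    have hNbS : Nb ⊆ S₂ := by
      intro w hw
      obtain ⟨_, _, hcase⟩ := hmem w hw
      rcases hcase with ⟨hve, _⟩ | ⟨_, hE⟩
      · exact absurd hve hv1
      · exact hsub2 w hw hE
    have hd : Nb.card ≤ S₂.card := Finset.card_le_card hNbS
    have hf2' : (Nb.filter (fun w => w.1 ∈ G₂.edgeSet)).card ≤ S₂.card :=
      Finset.card_le_card (fun w hw => hNbS (Finset.mem_filter.1 hw).1)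
    have hf1' : (Nb.filter (fun w => w.1 ∈ G₁.edgeSet)).card ≤ S₂.card :=
      Finset.card_le_card (fun w hw => hNbS (Finset.mem_filter.1 hw).1)
    rw [hsum, hW]
    omega
  · tauto

lemma glauberStep_apply_ne {V : Type} (G₁ G₂ : SimpleGraph V) {k : ℕ}
    (σ : HatVertex G₁ G₂ → Fin k) (w : HatVertex G₁ G₂) (c : Fin k)
    (x : HatVertex G₁ G₂) (hx : x ≠ w) :
    glauberStep G₁ G₂ σ w c x = σ x := by
  unfold glauberStep
  split_ifs
  · exact Function.update_of_ne hx _ _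
  · rfl

lemma hatH_eq_single {V : Type} [Fintype V] (G₁ G₂ : SimpleGraph V) {k : ℕ}
    (σ τ : HatVertex G₁ G₂ → Fin k) (v : HatVertex G₁ G₂)
    (h1 : σ v ≠ τ v) (h2 : ∀ x, x ≠ v → σ x = τ x) :
    hatH G₁ G₂ σ τ = (hatWeight G₁ G₂ v : ℝ) := by
  classical
  unfold hatH
  rw [← Finset.sum_subset (Finset.subset_univ ({v} : Finset (HatVertex G₁ G₂)))
      (fun x _ hx => by
        rw [Finset.mem_singleton] at hx
        rw [if_neg (not_not_intro (h2 x hx))])]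
  rw [Finset.sum_singleton, if_pos h1]

lemma hatH_le_two {V : Type} [Fintype V] (G₁ G₂ : SimpleGraph V) {k : ℕ}
    (σ τ : HatVertex G₁ G₂ → Fin k) (v w : HatVertex G₁ G₂)
    (hoff : ∀ x, x ≠ v → x ≠ w → σ x = τ x) :
    hatH G₁ G₂ σ τ ≤ (if σ v ≠ τ v then (hatWeight G₁ G₂ v : ℝ) else 0) +
      (if σ w ≠ τ w then (hatWeight G₁ G₂ w : ℝ) else 0) := by
  classical
  unfold hatH
  rw [← Finset.sum_subset (Finset.subset_univ ({v, w} : Finset (HatVertex G₁ G₂)))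
      (fun x _ hx => by
        simp only [Finset.mem_insert, Finset.mem_singleton] at hx
        push_neg at hx
        rw [if_neg (not_not_intro (hoff x hx.1 hx.2))])]
  rcases eq_or_ne v w with rfl | hvw
  · rw [Finset.insert_eq_self.2 (Finset.mem_singleton_self v), Finset.sum_singleton]
    have : (0:ℝ) ≤ if σ v ≠ τ v then (hatWeight G₁ G₂ v : ℝ) else 0 := by
      split_ifs <;> positivity
    linarith
  · rw [Finset.sum_pair hvw]

lemma hatH_eq_zero {V : Type} [Fintype V] (G₁ G₂ : SimpleGraph V) {k : ℕ}
    (σ τ : HatVertex G₁ G₂ → Fin k) (h : ∀ x, σ x = τ x) :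
    hatH G₁ G₂ σ τ = 0 := by
  unfold hatH
  exact Finset.sum_eq_zero fun x _ => if_neg (not_not_intro (h x))

lemma glauberStep_eq_self {V : Type} (G₁ G₂ : SimpleGraph V) {k : ℕ}
    (σ : HatVertex G₁ G₂ → Fin k) (w : HatVertex G₁ G₂) (c : Fin k)
    (h : ¬ ∀ u, (hatG G₁ G₂).Adj w u → σ u ≠ c) :
    glauberStep G₁ G₂ σ w c = σ := if_neg h

lemma glauberStep_pos_apply {V : Type} (G₁ G₂ : SimpleGraph V) {k : ℕ}
    (σ : HatVertex G₁ G₂ → Fin k) (w : HatVertex G₁ G₂) (c : Fin k)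
    (h : ∀ u, (hatG G₁ G₂).Adj w u → σ u ≠ c) :
    glauberStep G₁ G₂ σ w c w = c := by
  unfold glauberStep
  rw [if_pos h, Function.update_self]

lemma glauberStep_congr {V : Type} (G₁ G₂ : SimpleGraph V) {k : ℕ}
    (σ τ : HatVertex G₁ G₂ → Fin k) (w : HatVertex G₁ G₂) (c : Fin k)
    (hagree : ∀ x, x ≠ w → σ x = τ x)
    (hσ : ∀ u, (hatG G₁ G₂).Adj w u → σ u ≠ c)
    (hτ : ∀ u, (hatG G₁ G₂).Adj w u → τ u ≠ c) (x : HatVertex G₁ G₂) :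
    glauberStep G₁ G₂ σ w c x = glauberStep G₁ G₂ τ w c x := by
  unfold glauberStep
  rw [if_pos hσ, if_pos hτ]
  rcases eq_or_ne x w with rfl | hx
  · rw [Function.update_self, Function.update_self]
  · rw [Function.update_of_ne hx, Function.update_of_ne hx]
    exact hagree x hx

end

/-- If `k > (6+δ)Δ`, then for colorings `X, Y` differing at exactly one
vertex there is a coupling of the one-step Glauber transition distributions under which
`E[Ĥ(X′,Y′)] ≤ (1 − δ/((6+δ)m))·Ĥ(X,Y)`. -/
theorem glauber_coupling_contraction (δ : ℝ) (hδ : 0 < δ)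
    {V : Type} [Fintype V] [DecidableEq V]
    (G₁ G₂ : SimpleGraph V) (Δ k : ℕ)
    (h₁ : ∀ v : V, (G₁.neighborSet v).ncard ≤ Δ)
    (h₂ : ∀ v : V, (G₂.neighborSet v).ncard ≤ Δ)
    (hk : (6 + δ) * (Δ : ℝ) < (k : ℝ))
    (X Y : HatVertex G₁ G₂ → Fin k) (v : HatVertex G₁ G₂)
    (hv : X v ≠ Y v) (hXY : ∀ w, w ≠ v → X w = Y w) :
    ∃ γ : ((HatVertex G₁ G₂ → Fin k) × (HatVertex G₁ G₂ → Fin k)) → ℝ,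
      IsCoupling γ (glauberP G₁ G₂ k X) (glauberP G₁ G₂ k Y) ∧
      ∑ q : (HatVertex G₁ G₂ → Fin k) × (HatVertex G₁ G₂ → Fin k),
          γ q * hatH G₁ G₂ q.1 q.2 ≤
        (1 - δ / ((6 + δ) * (Fintype.card (HatVertex G₁ G₂) : ℝ))) * hatH G₁ G₂ X Y := by
  classical
  have hm0 : 0 < Fintype.card (HatVertex G₁ G₂) := Fintype.card_pos_iff.2 ⟨v⟩
  have hk0 : 0 < k := (X v).pos
  set pw : HatVertex G₁ G₂ → Equiv.Perm (Fin k) :=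
    fun w => if (hatG G₁ G₂).Adj v w then Equiv.swap (X v) (Y v) else 1 with hpw
  set D : ℝ := (Fintype.card (HatVertex G₁ G₂) : ℝ) * (k : ℝ) with hD
  have hDpos : 0 < D := by
    rw [hD]
    exact mul_pos (by exact_mod_cast hm0) (by exact_mod_cast hk0)
  set P : HatVertex G₁ G₂ → Fin k →
      ((HatVertex G₁ G₂ → Fin k) × (HatVertex G₁ G₂ → Fin k)) :=
    fun w c => (glauberStep G₁ G₂ X w c, glauberStep G₁ G₂ Y w (pw w c)) with hP
  refine ⟨fun q => (∑ w : HatVertex G₁ G₂, ∑ c : Fin k,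
      if P w c = q then (1:ℝ) else 0) / D, ⟨?_, ?_, ?_⟩, ?_⟩
  · intro q
    apply div_nonneg _ hDpos.le
    refine Finset.sum_nonneg fun w _ => Finset.sum_nonneg fun c _ => ?_
    split_ifs <;> norm_num
  · intro a
    show (∑ b, (∑ w : HatVertex G₁ G₂, ∑ c : Fin k,
        if P w c = (a, b) then (1:ℝ) else 0) / D) = _
    rw [← Finset.sum_div]
    unfold glauberP
    rw [← hD]
    congr 1
    rw [Finset.sum_comm]
    refine Finset.sum_congr rfl fun w _ => ?_
    rw [Finset.sum_comm]
    refine Finset.sum_congr rfl fun c _ => ?_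
    by_cases h : glauberStep G₁ G₂ X w c = a
    · simp [hP, Prod.ext_iff, h, Finset.sum_ite_eq]
    · simp [hP, Prod.ext_iff, h]
  · intro b
    show (∑ a, (∑ w : HatVertex G₁ G₂, ∑ c : Fin k,
        if P w c = (a, b) then (1:ℝ) else 0) / D) = _
    rw [← Finset.sum_div]
    unfold glauberP
    rw [← hD]
    congr 1
    rw [Finset.sum_comm]
    refine Finset.sum_congr rfl fun w _ => ?_
    rw [Finset.sum_comm]
    have hcol : ∀ c : Fin k, (∑ a, if P w c = (a, b) then (1:ℝ) else 0) =
        (if glauberStep G₁ G₂ Y w (pw w c) = b then (1:ℝ) else 0) := by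
      intro c
      by_cases h : glauberStep G₁ G₂ Y w (pw w c) = b
      · simp [hP, Prod.ext_iff, h, Finset.sum_ite_eq]
      · simp [hP, Prod.ext_iff, h]
    rw [Finset.sum_congr rfl fun c _ => hcol c]
    exact Equiv.sum_comp (pw w) (fun c => if glauberStep G₁ G₂ Y w c = b then (1:ℝ) else 0)
  · -- the expectation bound
    have hHXY : hatH G₁ G₂ X Y = (hatWeight G₁ G₂ v : ℝ) :=
      hatH_eq_single G₁ G₂ X Y v hv hXY
    have hE : (∑ q : (HatVertex G₁ G₂ → Fin k) × (HatVertex G₁ G₂ → Fin k),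
        ((∑ w : HatVertex G₁ G₂, ∑ c : Fin k, if P w c = q then (1:ℝ) else 0) / D) *
          hatH G₁ G₂ q.1 q.2) =
        (∑ w : HatVertex G₁ G₂, ∑ c : Fin k, hatH G₁ G₂ (P w c).1 (P w c).2) / D := by
      simp_rw [div_mul_eq_mul_div]
      rw [← Finset.sum_div]
      congr 1
      simp_rw [Finset.sum_mul]
      rw [Finset.sum_comm]
      refine Finset.sum_congr rfl fun w _ => ?_
      rw [Finset.sum_comm]
      refine Finset.sum_congr rfl fun c _ => ?_
      simp [ite_mul, zero_mul, one_mul, Finset.sum_ite_eq]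
    rw [hE, div_le_iff₀ hDpos]
    -- notation
    set Nb : Finset (HatVertex G₁ G₂) :=
      Finset.univ.filter (fun w => (hatG G₁ G₂).Adj v w) with hNb
    set Bad : Finset (Fin k) := Nb.image X with hBadDef
    set Wv : ℝ := (hatWeight G₁ G₂ v : ℝ) with hWv
    -- the pointwise bound
    have key : ∀ (w : HatVertex G₁ G₂) (c : Fin k),
        hatH G₁ G₂ (P w c).1 (P w c).2 ≤
          (if w = v then (if c ∈ Bad then Wv else 0)
          else (Wv + if (hatG G₁ G₂).Adj v w ∧ c = Y v
            then (hatWeight G₁ G₂ w : ℝ) else 0)) := by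
      intro w c
      simp only [hP]
      by_cases hw : w = v
      · subst hw
        rw [if_pos rfl]
        have hpwc : pw w c = c := by
          simp [hpw, SimpleGraph.irrefl]
        rw [hpwc]
        by_cases hb : c ∈ Bad
        · rw [if_pos hb]
          obtain ⟨u, hu, hXu⟩ := Finset.mem_image.1 hb
          have hadj : (hatG G₁ G₂).Adj w u := (Finset.mem_filter.1 hu).2
          have hune : u ≠ w := fun h => (hatG G₁ G₂).irrefl (h ▸ hadj)
          have hcondX : ¬ ∀ u', (hatG G₁ G₂).Adj w u' → X u' ≠ c :=
            fun h => h u hadj hXu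
          have hcondY : ¬ ∀ u', (hatG G₁ G₂).Adj w u' → Y u' ≠ c :=
            fun h => h u hadj (by rw [← hXY u hune]; exact hXu)
          rw [glauberStep_eq_self G₁ G₂ X w c hcondX, glauberStep_eq_self G₁ G₂ Y w c hcondY]
          exact le_of_eq (hatH_eq_single G₁ G₂ X Y w hv hXY)
        · rw [if_neg hb]
          have hcondX : ∀ u, (hatG G₁ G₂).Adj w u → X u ≠ c := by
            intro u hadj hXu
            exact hb (Finset.mem_image.2
              ⟨u, Finset.mem_filter.2 ⟨Finset.mem_univ u, hadj⟩, hXu⟩)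
          have hcondY : ∀ u, (hatG G₁ G₂).Adj w u → Y u ≠ c := by
            intro u hadj
            have hune : u ≠ w := fun h => (hatG G₁ G₂).irrefl (h ▸ hadj)
            rw [← hXY u hune]
            exact hcondX u hadj
          exact le_of_eq (hatH_eq_zero G₁ G₂ _ _
            (glauberStep_congr G₁ G₂ X Y w c hXY hcondX hcondY))
      · rw [if_neg hw]
        have hoff : ∀ x, x ≠ v → x ≠ w →
            glauberStep G₁ G₂ X w c x = glauberStep G₁ G₂ Y w (pw w c) x := by
          intro x hxv hxw
          rw [glauberStep_apply_ne _ _ _ _ _ _ hxw,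
            glauberStep_apply_ne _ _ _ _ _ _ hxw, hXY x hxv]
        have hb := hatH_le_two G₁ G₂ (glauberStep G₁ G₂ X w c)
          (glauberStep G₁ G₂ Y w (pw w c)) v w hoff
        have hvw : v ≠ w := fun h => hw h.symm
        rw [glauberStep_apply_ne _ _ _ _ _ _ hvw, glauberStep_apply_ne _ _ _ _ _ _ hvw,
          if_pos hv] at hb
        rw [← hWv] at hb
        refine le_trans hb (add_le_add le_rfl ?_)
        by_cases hcase : (hatG G₁ G₂).Adj v w ∧ c = Y v
        · rw [if_pos hcase]
          split_ifs
          · exact le_refl _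
          · positivity
        · rw [if_neg hcase]
          have heq : glauberStep G₁ G₂ X w c w = glauberStep G₁ G₂ Y w (pw w c) w := by
            by_cases hadj : (hatG G₁ G₂).Adj v w
            · have hcne : c ≠ Y v := fun h => hcase ⟨hadj, h⟩
              have hpweq : pw w = Equiv.swap (X v) (Y v) := by simp [hpw, hadj]
              by_cases hcx : c = X v
              · have h1 : pw w c = Y v := by
                  rw [hpweq, hcx]; exact Equiv.swap_apply_left _ _
                have hadj' : (hatG G₁ G₂).Adj w v := hadj.symm
                have hcondX : ¬ ∀ u, (hatG G₁ G₂).Adj w u → X u ≠ c :=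
                  fun h => (h v hadj') hcx.symm
                have hcondY : ¬ ∀ u, (hatG G₁ G₂).Adj w u → Y u ≠ pw w c :=
                  fun h => (h v hadj') h1.symm
                rw [glauberStep_eq_self G₁ G₂ X w c hcondX,
                  glauberStep_eq_self G₁ G₂ Y w (pw w c) hcondY]
                exact hXY w hw
              · have h1 : pw w c = c := by
                  rw [hpweq]; exact Equiv.swap_apply_of_ne_of_ne hcx hcne
                rw [h1]
                have hiff : (∀ u, (hatG G₁ G₂).Adj w u → X u ≠ c) ↔
                    (∀ u, (hatG G₁ G₂).Adj w u → Y u ≠ c) := by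
                  constructor <;> intro h u hu
                  · rcases eq_or_ne u v with rfl | hne
                    · exact fun hc => hcne hc.symm
                    · rw [← hXY u hne]; exact h u hu
                  · rcases eq_or_ne u v with rfl | hne
                    · exact fun hc => hcx hc.symm
                    · rw [hXY u hne]; exact h u hu
                by_cases hcond : ∀ u, (hatG G₁ G₂).Adj w u → X u ≠ c
                · rw [glauberStep_pos_apply G₁ G₂ X w c hcond,
                    glauberStep_pos_apply G₁ G₂ Y w c (hiff.1 hcond)]
                · rw [glauberStep_eq_self G₁ G₂ X w c hcond,
                    glauberStep_eq_self G₁ G₂ Y w c (fun h => hcond (hiff.2 h))]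
                  exact hXY w hw
            · have h1 : pw w c = c := by simp [hpw, hadj]
              rw [h1]
              have hiff : (∀ u, (hatG G₁ G₂).Adj w u → X u ≠ c) ↔
                  (∀ u, (hatG G₁ G₂).Adj w u → Y u ≠ c) := by
                constructor <;> intro h u hu
                · have hne : u ≠ v := fun he => hadj (he ▸ hu).symm
                  rw [← hXY u hne]; exact h u hu
                · have hne : u ≠ v := fun he => hadj (he ▸ hu).symm
                  rw [hXY u hne]; exact h u hu
              by_cases hcond : ∀ u, (hatG G₁ G₂).Adj w u → X u ≠ c
              · rw [glauberStep_pos_apply G₁ G₂ X w c hcond,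
                  glauberStep_pos_apply G₁ G₂ Y w c (hiff.1 hcond)]
              · rw [glauberStep_eq_self G₁ G₂ X w c hcond,
                  glauberStep_eq_self G₁ G₂ Y w c (fun h => hcond (hiff.2 h))]
                exact hXY w hw
          rw [if_neg (not_not_intro heq)]
    -- sum up the pointwise bound
    have hS : (∑ w : HatVertex G₁ G₂, ∑ c : Fin k, hatH G₁ G₂ (P w c).1 (P w c).2) ≤
        ∑ w : HatVertex G₁ G₂, ∑ c : Fin k,
          (if w = v then (if c ∈ Bad then Wv else 0)
          else (Wv + if (hatG G₁ G₂).Adj v w ∧ c = Y v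
            then (hatWeight G₁ G₂ w : ℝ) else 0)) :=
      Finset.sum_le_sum fun w _ => Finset.sum_le_sum fun c _ => key w c
    set Dsum : ℝ := ∑ w : HatVertex G₁ G₂,
      (if (hatG G₁ G₂).Adj v w then (hatWeight G₁ G₂ w : ℝ) else 0) with hDsumDef
    have hT : (∑ w : HatVertex G₁ G₂, ∑ c : Fin k,
          (if w = v then (if c ∈ Bad then Wv else 0)
          else (Wv + if (hatG G₁ G₂).Adj v w ∧ c = Y v
            then (hatWeight G₁ G₂ w : ℝ) else 0))) =
        (Bad.card : ℝ) * Wv +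
          ((Fintype.card (HatVertex G₁ G₂) : ℝ) * (k : ℝ) * Wv + Dsum - (k : ℝ) * Wv) := by
      rw [← Finset.add_sum_erase _ _ (Finset.mem_univ v)]
      congr 1
      · simp only [if_pos rfl]
        have hgen : ∀ s : Finset (Fin k), (∑ c : Fin k, if c ∈ s then Wv else 0) =
            (s.card : ℝ) * Wv := by
          intro s
          rw [Finset.sum_ite_mem, Finset.univ_inter, Finset.sum_const, nsmul_eq_mul]
        exact hgen Bad
      · have hrow : ∀ w ∈ Finset.univ.erase v,
            (∑ c : Fin k, (if w = v then (if c ∈ Bad then Wv else 0)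
              else (Wv + if (hatG G₁ G₂).Adj v w ∧ c = Y v
                then (hatWeight G₁ G₂ w : ℝ) else 0))) =
            (k : ℝ) * Wv + (if (hatG G₁ G₂).Adj v w then (hatWeight G₁ G₂ w : ℝ) else 0) := by
          intro w hw'
          have hne : w ≠ v := (Finset.mem_erase.1 hw').1
          simp only [if_neg hne]
          rw [Finset.sum_add_distrib, Finset.sum_const, Finset.card_univ,
            Fintype.card_fin, nsmul_eq_mul]
          congr 1
          by_cases hadj : (hatG G₁ G₂).Adj v w
          · simp [hadj, Finset.sum_ite_eq']
          · simp [hadj]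
        rw [Finset.sum_congr rfl hrow, Finset.sum_erase_eq_sub (Finset.mem_univ v),
          Finset.sum_add_distrib, Finset.sum_const, Finset.card_univ, nsmul_eq_mul,
          if_neg (SimpleGraph.irrefl (hatG G₁ G₂)), ← hDsumDef]
        ring
    -- the combinatorial bound
    have hDsumNat : Dsum = ((∑ w ∈ Nb, hatWeight G₁ G₂ w : ℕ) : ℝ) := by
      rw [hDsumDef, hNb, Nat.cast_sum, Finset.sum_filter]
    have hcomb := nbhd_bound G₁ G₂ Δ h₁ h₂ v
    rw [← hNb] at hcomb
    have hcombR : (Nb.card : ℝ) * Wv + Dsum ≤ 6 * (Δ : ℝ) * Wv := by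
      rw [hDsumNat, hWv]
      exact_mod_cast hcomb
    have hBadcard : (Bad.card : ℝ) ≤ (Nb.card : ℝ) := by
      exact_mod_cast Finset.card_image_le
    -- final arithmetic
    have hW1 : (1 : ℝ) ≤ Wv := by
      rw [hWv]; exact_mod_cast one_le_hatWeight G₁ G₂ v
    have hM1 : (1 : ℝ) ≤ (Fintype.card (HatVertex G₁ G₂) : ℝ) := by exact_mod_cast hm0
    have hK1 : (1 : ℝ) ≤ (k : ℝ) := by exact_mod_cast hk0
    have hc₀ : (0 : ℝ) < 6 + δ := by linarith
    have h6 : 6 * (Δ : ℝ) * Wv ≤ 6 * (k : ℝ) * Wv / (6 + δ) := by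
      rw [le_div_iff₀ hc₀]
      nlinarith [mul_le_mul_of_nonneg_right hk.le (show (0:ℝ) ≤ 6 * Wv by linarith)]
    have hRHS : (1 - δ / ((6 + δ) * (Fintype.card (HatVertex G₁ G₂) : ℝ))) *
        hatH G₁ G₂ X Y * D =
        (Fintype.card (HatVertex G₁ G₂) : ℝ) * (k : ℝ) * Wv - δ * (k : ℝ) * Wv / (6 + δ) := by
      rw [hHXY, hD]
      field_simp
    have hEq2 : (k : ℝ) * Wv - δ * (k : ℝ) * Wv / (6 + δ) = 6 * (k : ℝ) * Wv / (6 + δ) := by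
      field_simp
      ring
    rw [hRHS]
    refine le_trans hS ?_
    rw [hT]
    have hWpos : (0:ℝ) < Wv := by linarith
    linarith [mul_le_mul_of_nonneg_right hBadcard hWpos.le]
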